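/- Let π be a finitely generated group that contains a finite-index subgroup which is RFRS. Then for every element g ∈ π of infinite order, the cyclic subgroup ⟨g⟩ generated by g is separable in π. -/

import Mathlib

lemma exists_hom_int_aux (A : Type*) [CommGroup A] [Group.FG A] (a : A)
    (ha : ¬ IsOfFinOrder a) : ∃ φ : A →* Multiplicative ℤ, φ a ≠ 1 := by
  classical
  let M := Additive A
  haveI : AddGroup.FG M := AddGroup.fg_of_group_fg
  haveI : Module.Finite ℤ M := Module.Finite.iff_addGroup_fg.mpr ‹_›
  set T := Submodule.torsion ℤ M with hT
  let Q := M ⧸ T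
  haveI : Module.Finite ℤ Q := Module.Finite.quotient ℤ T
  haveI : Module.IsTorsionFree ℤ Q := inferInstance
  haveI : Module.Free ℤ Q := Module.free_of_finite_type_torsion_free'
  let a' : M := Additive.ofMul a
  have haM : ¬ IsOfFinAddOrder a' := by
    rwa [isOfFinAddOrder_ofMul_iff]
  have hmk : T.mkQ a' ≠ 0 := by
    intro h
    apply haM
    rw [Submodule.mkQ_apply, Submodule.Quotient.mk_eq_zero] at h
    obtain ⟨⟨n, hn⟩, hna⟩ := h
    rw [isOfFinAddOrder_iff_zsmul_eq_zero]
    exact ⟨n, mem_nonZeroDivisors_iff_ne_zero.mp hn, hna⟩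
  let b := Module.Free.chooseBasis ℤ Q
  have hrepr : b.repr (T.mkQ a') ≠ 0 := by
    intro h
    exact hmk (b.repr.map_eq_zero_iff.mp h)
  obtain ⟨i, hi⟩ : ∃ i, b.repr (T.mkQ a') i ≠ 0 := by
    by_contra hc
    push_neg at hc
    exact hrepr (Finsupp.ext hc)
  let ψ : M →ₗ[ℤ] ℤ := (b.coord i).comp T.mkQ
  refine ⟨MonoidHom.mk' (fun x => Multiplicative.ofAdd (ψ (Additive.ofMul x))) ?_, ?_⟩
  · intro x y
    simp [ψ, map_add]
  · exact hi


lemma sep_in_group_aux {H : Type*} [Group H]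
    (rf : ∀ x : H, x ≠ 1 → ∃ (Q : Type) (_ : Group Q) (_ : Finite Q) (ψ : H →* Q), ψ x ≠ 1)
    (φ : H →* Multiplicative ℤ) (z : H) (hz : φ z ≠ 1) (h : H)
    (hh : h ∉ Subgroup.zpowers z) :
    ∃ (Q : Type) (_ : Group Q) (_ : Finite Q) (Φ : H →* Q), ∀ l : ℤ, Φ h ≠ Φ (z ^ l) := by
  classical
  set c : ℤ := Multiplicative.toAdd (φ z) with hc
  have hc0 : c ≠ 0 := fun e => hz (by
    have := congrArg Multiplicative.ofAdd e
    exact this)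
  set d : ℤ := Multiplicative.toAdd (φ h) with hd
  have hcabs : 0 < c.natAbs := Int.natAbs_pos.mpr hc0
  by_cases hdvd : c ∣ d
  · obtain ⟨l₀, hl₀⟩ := hdvd
    have hne : h * z ^ (-l₀) ≠ 1 := by
      intro e
      apply hh
      have : h = z ^ l₀ := by
        have := congrArg (· * z ^ l₀) e
        simpa [mul_assoc, ← zpow_add] using this
      exact this ▸ Subgroup.zpow_mem _ (Subgroup.mem_zpowers z) l₀
    obtain ⟨Q, _, _, ψ, hψ⟩ := rf _ hne
    set M := orderOf (ψ z) with hMdef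
    have hM : 0 < M := orderOf_pos (ψ z)
    set n := c.natAbs * M with hn
    haveI : NeZero n := ⟨Nat.mul_ne_zero hcabs.ne' hM.ne'⟩
    let χ : Multiplicative ℤ →* Multiplicative (ZMod n) :=
      AddMonoidHom.toMultiplicative (Int.castAddHom (ZMod n))
    refine ⟨Q × Multiplicative (ZMod n), inferInstance, inferInstance,
      ψ.prod (χ.comp φ), ?_⟩
    intro l heq
    rw [Prod.ext_iff] at heq
    obtain ⟨h1, h2⟩ := heq
    simp only [MonoidHom.prod_apply] at h1 h2
    -- second coordinate
    have h2' : ((d : ZMod n)) = ((l * c : ℤ) : ZMod n) := by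
      have := congrArg Multiplicative.toAdd h2
      simpa [χ, hd, map_zpow, smul_eq_mul] using this
    have hdvd2 : (n : ℤ) ∣ d - l * c := by
      exact ((ZMod.intCast_eq_intCast_iff _ _ _).mp h2').symm.dvd
    have hdvd3 : (n : ℤ) ∣ c * (l₀ - l) := by
      have : c * (l₀ - l) = d - l * c := by rw [hl₀]; ring
      rwa [this]
    have hMdvd : (M : ℤ) ∣ l₀ - l := by
      have h4 : n ∣ (c * (l₀ - l)).natAbs := by
        rwa [← Int.natAbs_natCast n, Int.natAbs_dvd_natAbs]
      rw [Int.natAbs_mul, hn] at h4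
      have h5 : M ∣ (l₀ - l).natAbs := (Nat.mul_dvd_mul_iff_left hcabs).mp h4
      exact Int.dvd_natAbs.mp (Int.natCast_dvd_natCast.mpr h5)
    have hzpow : ψ z ^ (l₀ - l) = 1 := by
      obtain ⟨t, ht⟩ := hMdvd
      rw [ht, zpow_mul, zpow_natCast, pow_orderOf_eq_one, one_zpow]
    apply hψ
    have : ψ h = ψ z ^ l := by rw [h1, map_zpow]
    calc ψ (h * z ^ (-l₀)) = ψ h * ψ z ^ (-l₀) := by rw [map_mul, map_zpow]
      _ = ψ z ^ l * ψ z ^ (-l₀) := by rw [this]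
      _ = ψ z ^ (l - l₀) := by rw [← zpow_add]; ring_nf
      _ = (ψ z ^ (l₀ - l))⁻¹ := by rw [← zpow_neg]; ring_nf
      _ = 1 := by rw [hzpow, inv_one]
  · haveI : NeZero c.natAbs := ⟨hcabs.ne'⟩
    let χ : Multiplicative ℤ →* Multiplicative (ZMod c.natAbs) :=
      AddMonoidHom.toMultiplicative (Int.castAddHom (ZMod c.natAbs))
    refine ⟨Multiplicative (ZMod c.natAbs), inferInstance, inferInstance, χ.comp φ, ?_⟩
    intro l heq
    apply hdvd
    have h2' : ((d : ZMod c.natAbs)) = ((l * c : ℤ) : ZMod c.natAbs) := by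
      have := congrArg Multiplicative.toAdd heq
      simpa [χ, hd, map_zpow, smul_eq_mul] using this
    have hdvd2 : ((c.natAbs : ℤ)) ∣ d - l * c := by
      exact ((ZMod.intCast_eq_intCast_iff _ _ _).mp h2').symm.dvd
    have : c ∣ d - l * c := (Int.natAbs_dvd).mp hdvd2
    have : c ∣ d - l * c + l * c := Dvd.dvd.add this (dvd_mul_left c l)
    simpa using this

/-- A group `π` is RFRS (residually finite rationally solvable) if there is a descending
chain `π = π₀ ⊇ π₁ ⊇ ⋯` of normal finite-index subgroups with trivial intersection such
that for every `i`, every element of `πᵢ` whose image in the abelianization of `πᵢ` has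
finite order lies in `πᵢ₊₁`. -/
def IsRFRS (π : Type) [Group π] : Prop :=
  ∃ c : ℕ → Subgroup π,
    c 0 = ⊤ ∧ (∀ i, c (i + 1) ≤ c i) ∧ (∀ i, (c i).Normal) ∧ (∀ i, (c i).FiniteIndex) ∧
    (⨅ i, c i) = ⊥ ∧
    ∀ (i : ℕ) (x : ↥(c i)), IsOfFinOrder (Abelianization.of x) → (x : π) ∈ c (i + 1)

/-- A subgroup `S` of a group `G` is separable if for every `g ∈ G` with `g ∉ S` there
is a homomorphism `φ` from `G` to a finite group with `φ g ∉ φ(S)`. -/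
def IsSeparableSubgroup {G : Type} [Group G] (S : Subgroup G) : Prop :=
  ∀ g : G, g ∉ S → ∃ (Q : Type) (_ : Group Q) (_ : Finite Q) (φ : G →* Q),
    φ g ∉ S.map φ

/-- If a finitely generated group `π` has a finite-index RFRS subgroup, then for every
element `g ∈ π` of infinite order the cyclic subgroup `⟨g⟩` is separable in `π`. -/
theorem cyclic_subgroup_separable_of_virtually_rfrs
    {π : Type} [Group π] [Group.FG π]
    (K : Subgroup π) (hK : K.FiniteIndex) (hrfrs : IsRFRS ↥K)
    (g : π) (hg : ¬ IsOfFinOrder g) :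
    IsSeparableSubgroup (Subgroup.zpowers g) := by
  classical
  obtain ⟨c, hc0, hstep, hnorm, hfin, hinf, hR⟩ := hrfrs
  haveI := hK
  intro h hh
  have hanti : ∀ {a b : ℕ}, a ≤ b → c b ≤ c a := by
    intro a b hab
    induction hab with
    | refl => exact le_rfl
    | step _ ih => exact le_trans (hstep _) ih
  set m₀ := K.normalCore.index with hm₀
  have hm₀pos : 0 < m₀ :=
    Nat.pos_of_ne_zero (Subgroup.FiniteIndex.index_ne_zero (H := K.normalCore))
  have hzK : g ^ m₀ ∈ K := K.normalCore_le (Subgroup.pow_index_mem K.normalCore g)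
  set x₀ : ↥K := ⟨g ^ m₀, hzK⟩ with hx₀
  have hx₀ne : x₀ ≠ 1 := by
    intro e
    apply hg
    have he : g ^ m₀ = 1 := congrArg Subtype.val e
    exact isOfFinOrder_iff_pow_eq_one.mpr ⟨m₀, hm₀pos, he⟩
  have hexists : ∃ (i : ℕ) (hx : x₀ ∈ c i),
      ¬ IsOfFinOrder (Abelianization.of (⟨x₀, hx⟩ : ↥(c i))) := by
    by_contra hcon
    push_neg at hcon
    have hall : ∀ i, x₀ ∈ c i := by
      intro i
      induction i with
      | zero => rw [hc0]; trivial
      | succ i ih => exact hR i ⟨x₀, ih⟩ (hcon i ih)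
    have hmem : x₀ ∈ ⨅ i, c i := Subgroup.mem_iInf.mpr hall
    rw [hinf, Subgroup.mem_bot] at hmem
    exact hx₀ne hmem
  obtain ⟨i, hxi, hnotfin⟩ := hexists
  set Ci := c i with hCi
  set H : Subgroup π := Ci.map K.subtype with hHdef
  have hHfin : H.FiniteIndex := by
    constructor
    rw [hHdef, Subgroup.index_map_subtype]
    exact Nat.mul_ne_zero ((hfin i).index_ne_zero) hK.index_ne_zero
  haveI := hHfin
  haveI : Group.FG ↥H := Subgroup.fg_of_index_ne_zero H
  let e : ↥Ci ≃* ↥H := Subgroup.equivMapOfInjective Ci K.subtype K.subtype_injective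
  haveI : Group.FG ↥Ci :=
    Group.fg_of_surjective (f := e.symm.toMonoidHom) e.symm.surjective
  have hofsurj : Function.Surjective (Abelianization.of (G := ↥Ci)) :=
    fun x => Quotient.inductionOn' x fun a => ⟨a, rfl⟩
  haveI : Group.FG (Abelianization ↥Ci) :=
    Group.fg_of_surjective (f := Abelianization.of) hofsurj
  set x₁ : ↥Ci := ⟨x₀, hxi⟩ with hx₁
  obtain ⟨φA, hφA⟩ := exists_hom_int_aux (Abelianization ↥Ci) (Abelianization.of x₁) hnotfin
  set φ : ↥Ci →* Multiplicative ℤ := φA.comp Abelianization.of with hφdef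
  have hφz : φ x₁ ≠ 1 := hφA
  have rf : ∀ x : ↥Ci, x ≠ 1 →
      ∃ (Q : Type) (_ : Group Q) (_ : Finite Q) (ψ : ↥Ci →* Q), ψ x ≠ 1 := by
    intro x hx
    have hw : (x : ↥K) ≠ 1 := fun e' => hx (Subtype.ext e')
    have hnotinf : ¬ (x : ↥K) ∈ ⨅ j, c j := by
      rw [hinf, Subgroup.mem_bot]; exact hw
    rw [Subgroup.mem_iInf] at hnotinf
    push_neg at hnotinf
    obtain ⟨j, hj⟩ := hnotinf
    haveI := hnorm (max i j)
    haveI := hfin (max i j)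
    refine ⟨↥K ⧸ c (max i j), inferInstance, inferInstance,
      (QuotientGroup.mk' (c (max i j))).comp Ci.subtype, ?_⟩
    intro e'
    apply hj
    have hxm : (x : ↥K) ∈ c (max i j) := (QuotientGroup.eq_one_iff ((x : ↥K))).mp e'
    exact hanti (le_max_right i j) hxm
  set z : π := g ^ m₀ with hzdef
  have hzH : z ∈ H := ⟨x₀, hxi, rfl⟩
  have key : ∀ j : ℕ, ∃ N : Subgroup π, N.FiniteIndex ∧
      ∀ l : ℤ, ∀ n ∈ N, g ^ (-(j:ℤ)) * h ≠ z ^ l * n := by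
    intro j
    by_cases hmem : g ^ (-(j:ℤ)) * h ∈ H
    · obtain ⟨w, hwCi, hwval⟩ := hmem
      have hwval' : (w : π) = g ^ (-(j:ℤ)) * h := hwval
      set y : ↥Ci := ⟨w, hwCi⟩ with hy'
      have hy : y ∉ Subgroup.zpowers x₁ := by
        intro hmem'
        obtain ⟨l, hl⟩ := Subgroup.mem_zpowers_iff.mp hmem'
        apply hh
        rw [Subgroup.mem_zpowers_iff]
        refine ⟨(j:ℤ) + (m₀:ℤ) * l, ?_⟩
        have hw1 : (↑(x₁ ^ l) : ↥K) = w := congrArg Subtype.val hl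
        have hw' : w = x₀ ^ l := by
          rw [← hw1]
          push_cast
          rfl
        have hwpi : (w : π) = g ^ ((m₀:ℤ) * l) := by
          rw [hw']
          push_cast
          show (g ^ m₀) ^ l = _
          rw [← zpow_natCast g m₀, ← zpow_mul]
        have hgoal : h = g ^ ((j:ℤ)) * (w : π) := by
          rw [hwval']
          rw [← mul_assoc, ← zpow_add, add_neg_cancel, zpow_zero, one_mul]
        rw [hgoal, hwpi, ← zpow_add]
      obtain ⟨Q, _, _, Φ, hΦ⟩ := sep_in_group_aux rf φ x₁ hφz y hy
      refine ⟨(Φ.ker.map Ci.subtype).map K.subtype, ?_, ?_⟩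
      · constructor
        rw [Subgroup.index_map_subtype, Subgroup.index_map_subtype]
        have h1 : Φ.ker.index ≠ 0 := Subgroup.FiniteIndex.index_ne_zero
        exact Nat.mul_ne_zero (Nat.mul_ne_zero h1 ((hfin i).index_ne_zero)) hK.index_ne_zero
      · intro l n hn heq
        obtain ⟨w', hw', hw'val⟩ := hn
        obtain ⟨n₁, hn₁ker, hn₁val⟩ := hw'
        have hw'val' : (w' : π) = n := hw'val
        have hn₁val' : ((n₁ : ↥K)) = w' := hn₁val
        have ew : w = x₀ ^ l * w' := by
          apply K.subtype_injective
          show (w : π) = ((x₀ ^ l * w' : ↥K) : π)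
          rw [hwval', heq]
          push_cast
          rw [hw'val']
        have ey : y = x₁ ^ l * n₁ := by
          apply Ci.subtype_injective
          show (y : ↥K) = ((x₁ ^ l * n₁ : ↥Ci) : ↥K)
          push_cast
          rw [hn₁val']
          exact ew
        have hΦn : Φ n₁ = 1 := hn₁ker
        apply hΦ l
        rw [ey, map_mul, hΦn, mul_one]
    · refine ⟨H, hHfin, ?_⟩
      intro l n hn heq
      apply hmem
      rw [heq]
      exact H.mul_mem (H.zpow_mem hzH l) hn
  choose N hNfin hNsep using key
  have hN'fin : (⨅ j : Fin m₀, N j).FiniteIndex :=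
    Subgroup.finiteIndex_iInf (fun j => hNfin j)
  haveI := hN'fin
  set Nf := (⨅ j : Fin m₀, N j).normalCore with hNf
  haveI : Nf.Normal := Subgroup.normalCore_normal _
  haveI : Nf.FiniteIndex := Subgroup.finiteIndex_normalCore _
  refine ⟨π ⧸ Nf, inferInstance, inferInstance, QuotientGroup.mk' Nf, ?_⟩
  intro hmemmap
  obtain ⟨s, hs, hseq⟩ := hmemmap
  obtain ⟨k, hk⟩ := Subgroup.mem_zpowers_iff.mp hs
  obtain ⟨n, hnN, hne⟩ := (QuotientGroup.mk'_eq_mk' _).mp hseq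
  set j : ℕ := (k % (m₀:ℤ)).toNat with hjdef
  have hm₀z : (0:ℤ) < (m₀:ℤ) := by exact_mod_cast hm₀pos
  have hjk : (j : ℤ) = k % (m₀:ℤ) := Int.toNat_of_nonneg (Int.emod_nonneg k hm₀z.ne')
  have hjlt : j < m₀ := by
    have := Int.emod_lt_of_pos k hm₀z
    omega
  apply hNsep j (k / (m₀:ℤ)) n
  · have h1 : Nf ≤ ⨅ j : Fin m₀, N j := Subgroup.normalCore_le _
    have h2 : (⨅ j : Fin m₀, N j) ≤ N j := iInf_le _ (⟨j, hjlt⟩ : Fin m₀)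
    exact h2 (h1 hnN)
  · have hh' : h = g ^ k * n := by rw [← hne, hk]
    rw [hh', ← mul_assoc, ← zpow_add]
    have harith : -(j:ℤ) + k = (m₀:ℤ) * (k / (m₀:ℤ)) := by
      have := Int.mul_ediv_add_emod k (m₀:ℤ)
      omega
    rw [harith, hzdef, ← zpow_natCast g m₀, ← zpow_mul]
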